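/- arXiv:1006.1133 — 2 statements merged into one kernel-verified Lean document; each statement's English description precedes it below -/
import Mathlib

section
/- Let Ω = { x ∈ ℝ⁴ : x₄ > √(x₁²+x₂²+x₃²) }, τ(x) = √(x₄² − x₁² − x₂² − x₃²), and U(x) = x / τ(x). For the temperature profile T(x) = τ(x)^{−3}, the heat-flow vector vanishes identically on Ω: (grad T)^ν + η(grad T, U)·U^ν + T·Σ_μ U^μ ∂_μ U^ν = 0 for every ν = 1,…,4. -/
open scoped BigOperators

noncomputable section

/-- Coefficients of the Minkowski metric `diag(1,1,1,−1)`
(the fourth coordinate, index `3`, is timelike). -/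
def etaCoef : Fin 4 → ℝ := fun μ => if μ = 3 then -1 else 1

/-- The Minkowski bilinear form on `ℝ⁴`: `η(v,w) = v₁w₁ + v₂w₂ + v₃w₃ − v₄w₄`. -/
def eta (v w : Fin 4 → ℝ) : ℝ := ∑ μ, etaCoef μ * v μ * w μ

/-- The components `η_{μν} = diag(1,1,1,−1)` of the Minkowski metric. -/
def etaMat (μ ν : Fin 4) : ℝ := if μ = ν then etaCoef μ else 0

/-- The partial derivative `∂_μ f (x)`. -/
def pd (μ : Fin 4) (f : (Fin 4 → ℝ) → ℝ) (x : Fin 4 → ℝ) : ℝ :=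
  fderiv ℝ f x (Pi.single μ 1)

/-- The Minkowski gradient `grad p = (∂₁p, ∂₂p, ∂₃p, −∂₄p)`. -/
def mgrad (p : (Fin 4 → ℝ) → ℝ) (x : Fin 4 → ℝ) : Fin 4 → ℝ :=
  fun ν => etaCoef ν * pd ν p x

/-- The relativistic Euler equations for the triple `(U, ρ, p)` on `Ω`:
`(ρ+p)·Σ_μ U^μ ∂_μ U^ν + (grad p)^ν + η(grad p, U)·U^ν = 0`. -/
def EulerEqs (Ω : Set (Fin 4 → ℝ)) (U : (Fin 4 → ℝ) → Fin 4 → ℝ)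
    (ρ p : (Fin 4 → ℝ) → ℝ) : Prop :=
  ∀ x ∈ Ω, ∀ ν : Fin 4,
    (ρ x + p x) * (∑ μ, U x μ * pd μ (fun y => U y ν) x)
      + mgrad p x ν + eta (mgrad p x) (U x) * U x ν = 0

/-- Conservation of energy along flow lines:
`(ρ+p)·Σ_μ ∂_μ U^μ + Σ_μ U^μ ∂_μ ρ = 0` on `Ω`. -/
def EnergyCons (Ω : Set (Fin 4 → ℝ)) (U : (Fin 4 → ℝ) → Fin 4 → ℝ)
    (ρ p : (Fin 4 → ℝ) → ℝ) : Prop :=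
  ∀ x ∈ Ω,
    (ρ x + p x) * (∑ μ, pd μ (fun y => U y μ) x) + (∑ μ, U x μ * pd μ ρ x) = 0

/-- The interior of the forward light cone in Minkowski `ℝ⁴`. -/
def lightcone : Set (Fin 4 → ℝ) :=
  {x | Real.sqrt ((x 0) ^ 2 + (x 1) ^ 2 + (x 2) ^ 2) < x 3}

/-- `τ(x) = √(x₄² − x₁² − x₂² − x₃²)`. -/
def tau (x : Fin 4 → ℝ) : ℝ :=
  Real.sqrt ((x 3) ^ 2 - (x 0) ^ 2 - (x 1) ^ 2 - (x 2) ^ 2)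

/-- The extended Hwa–Bjorken flow vector field `U(x) = x / τ(x)`. -/
def Ubj (x : Fin 4 → ℝ) : Fin 4 → ℝ := fun μ => x μ / tau x


def proj4 (μ : Fin 4) : (Fin 4 → ℝ) →L[ℝ] ℝ := ContinuousLinearMap.proj μ

def qform (y : Fin 4 → ℝ) : ℝ := (y 3) ^ 2 - (y 0) ^ 2 - (y 1) ^ 2 - (y 2) ^ 2

def Lq (x : Fin 4 → ℝ) : (Fin 4 → ℝ) →L[ℝ] ℝ :=
  (2 * x 3) • proj4 3 - (2 * x 0) • proj4 0 - (2 * x 1) • proj4 1 - (2 * x 2) • proj4 2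

lemma hasFDerivAt_qform (x : Fin 4 → ℝ) : HasFDerivAt qform (Lq x) x := by
  have h : ∀ μ : Fin 4, HasFDerivAt (fun y : Fin 4 → ℝ => (y μ) ^ 2)
      ((2 * x μ) • proj4 μ) x := by
    intro μ
    have h1 := ((proj4 μ).hasFDerivAt (x := x)).mul ((proj4 μ).hasFDerivAt (x := x))
    have key : ((proj4 μ) x • proj4 μ + (proj4 μ) x • proj4 μ : (Fin 4 → ℝ) →L[ℝ] ℝ)
        = (2 * x μ) • proj4 μ := by
      ext v; simp [proj4]; ring
    rw [key] at h1
    have e : (fun y : Fin 4 → ℝ => (y μ) ^ 2) = ⇑(proj4 μ) * ⇑(proj4 μ) := by funext y; simp [proj4, pow_two]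
    rw [e]; exact h1
  exact ((((h 3).sub (h 0)).sub (h 1)).sub (h 2))

lemma Lq_single (x : Fin 4 → ℝ) (μ : Fin 4) :
    Lq x (Pi.single μ 1) = -2 * etaCoef μ * x μ := by
  fin_cases μ <;>
    simp [Lq, proj4, etaCoef, Pi.single_apply]

lemma pd_T (x : Fin 4 → ℝ) (hs : 0 < qform x) (μ : Fin 4) :
    pd μ (fun y => (tau y ^ 3)⁻¹) x
      = 3 * etaCoef μ * x μ / Real.sqrt (qform x) ^ 5 := by
  have hc : 0 < Real.sqrt (qform x) := Real.sqrt_pos.2 hs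
  have hg := (((Real.hasDerivAt_sqrt hs.ne').pow 3).inv (pow_ne_zero 3 hc.ne'))
  have hF := hg.comp_hasFDerivAt x (hasFDerivAt_qform x)
  have hF' : HasFDerivAt (fun y => (tau y ^ 3)⁻¹)
      ((-(↑3 * Real.sqrt (qform x) ^ (3 - 1) * (1 / (2 * Real.sqrt (qform x)))) /
        (Real.sqrt (qform x) ^ 3) ^ 2) • Lq x) x := hF
  rw [pd, hF'.fderiv]
  simp only [ContinuousLinearMap.coe_smul', Pi.smul_apply, Lq_single, smul_eq_mul]
  have hq2 : Real.sqrt (qform x) ^ 2 = qform x := Real.sq_sqrt hs.le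
  field_simp

lemma pd_U (x : Fin 4 → ℝ) (hs : 0 < qform x) (μ ν : Fin 4) :
    pd μ (fun y => Ubj y ν) x
      = (if μ = ν then (1:ℝ) else 0) / Real.sqrt (qform x)
        + etaCoef μ * x μ * x ν / Real.sqrt (qform x) ^ 3 := by
  have hc : 0 < Real.sqrt (qform x) := Real.sqrt_pos.2 hs
  have hinv := (Real.hasDerivAt_sqrt hs.ne').inv hc.ne'
  have h2 := hinv.comp_hasFDerivAt x (hasFDerivAt_qform x)
  have h3 := ((proj4 ν).hasFDerivAt (x := x)).mul h2
  have h4 : HasFDerivAt (fun y => Ubj y ν)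
      ((proj4 ν) x • ((-(1 / (2 * Real.sqrt (qform x))) / Real.sqrt (qform x) ^ 2) • Lq x)
        + (Real.sqrt (qform x))⁻¹ • proj4 ν) x := by
    have : (fun y => Ubj y ν) = fun y => (proj4 ν) y * (Real.sqrt (qform y))⁻¹ := by
      funext y; simp [Ubj, tau, qform, proj4, div_eq_mul_inv]
    rw [this]; exact h3
  rw [pd, h4.fderiv]
  simp only [ContinuousLinearMap.add_apply, ContinuousLinearMap.coe_smul', Pi.smul_apply,
    Lq_single, smul_eq_mul, proj4, ContinuousLinearMap.proj_apply, Pi.single_apply]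
  have : (if ν = μ then (1:ℝ) else 0) = (if μ = ν then (1:ℝ) else 0) := by
    simp [eq_comm]
  rw [this]
  have hq2 : Real.sqrt (qform x) ^ 2 = qform x := Real.sq_sqrt hs.le
  field_simp
  split_ifs <;>
    linear_combination (0:ℝ) * hq2

set_option maxHeartbeats 1000000 in
/-- for the temperature profile `T = τ^{−3}`, the heat-flow
vector `Q = grad^H T + T·∇_U U` of the flow `U = x/τ` vanishes. -/
theorem statement10 :
    ∀ x ∈ lightcone, ∀ ν : Fin 4,
      mgrad (fun y => (tau y ^ 3)⁻¹) x ν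
        + eta (mgrad (fun y => (tau y ^ 3)⁻¹) x) (Ubj x) * Ubj x ν
        + (tau x ^ 3)⁻¹ * (∑ μ, Ubj x μ * pd μ (fun y => Ubj y ν) x) = 0 := by
  intro x hx ν
  have hx3 : Real.sqrt ((x 0) ^ 2 + (x 1) ^ 2 + (x 2) ^ 2) < x 3 := hx
  have hx3pos : 0 < x 3 := lt_of_le_of_lt (Real.sqrt_nonneg _) hx3
  have hs : 0 < qform x := by
    have h := (Real.sqrt_lt' hx3pos).mp hx3
    simp only [qform]; linarith
  have hc : 0 < Real.sqrt (qform x) := Real.sqrt_pos.2 hs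
  have htau : tau x = Real.sqrt (qform x) := rfl
  have hq2 : Real.sqrt (qform x) ^ 2 = qform x := Real.sq_sqrt hs.le
  have hrel : Real.sqrt (qform x) ^ 2 = (x 3) ^ 2 - (x 0) ^ 2 - (x 1) ^ 2 - (x 2) ^ 2 := hq2
  simp only [mgrad, eta, Fin.sum_univ_four]
  simp only [pd_T x hs, pd_U x hs]
  simp only [Ubj, htau]
  fin_cases ν <;> simp (config := { decide := true }) [etaCoef] <;> field_simp <;>
    first
      | linear_combination (4 * x 0) * hrel
      | linear_combination (4 * x 1) * hrel
      | linear_combination (4 * x 2) * hrel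
      | linear_combination (4 * x 3) * hrel
      | ring
end
end

section
/- Let Ω = { x ∈ ℝ⁴ : x₄ > |x₃| } and define U(x) = (0, 0, x₃, x₄) / √(x₄² − x₃²). Then η(U,U) = −1 on Ω, and for every real number k > 0 the triple (U, ρ, p) with ρ(x) = (x₄² − x₃²)^{−k} and p = (2k−1)ρ satisfies both the relativistic Euler equations and the energy conservation equation along flow lines on Ω. (Generalized Hwa–Bjorken flow of Example 3.2; k = 1 gives the stiff fluid ρ = p = (x₄²−x₃²)^{−1} and k = 2/3 gives the radiation fluid ρ = 3p = (x₄²−x₃²)^{−2/3}.) -/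
open scoped BigOperators

noncomputable section

/-- The future wedge `x₄ > |x₃|`. -/
def wedge : Set (Fin 4 → ℝ) := {x | |x 2| < x 3}

/-- The flow vector field `U(x) = (0, 0, x₃, x₄)/√(x₄² − x₃²)`. -/
def Uwedge (x : Fin 4 → ℝ) : Fin 4 → ℝ := fun ν =>
  (if ν = 2 then x 2 else if ν = 3 then x 3 else 0) /
    Real.sqrt ((x 3) ^ 2 - (x 2) ^ 2)

abbrev prj (i : Fin 4) : (Fin 4 → ℝ) →L[ℝ] ℝ := ContinuousLinearMap.proj i

lemma hasFDerivAt_s (x : Fin 4 → ℝ) :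
    HasFDerivAt (fun y : Fin 4 → ℝ => (y 3) ^ 2 - (y 2) ^ 2)
      ((2 * x 3) • prj 3 - (2 * x 2) • prj 2) x := by
  have h3 : HasFDerivAt (fun y : Fin 4 → ℝ => y 3) (prj 3) x := (prj 3).hasFDerivAt
  have h2 : HasFDerivAt (fun y : Fin 4 → ℝ => y 2) (prj 2) x := (prj 2).hasFDerivAt
  have := (h3.mul h3).sub (h2.mul h2)
  simp only [pow_two]
  refine this.congr_fderiv ?_
  ext v
  simp [ContinuousLinearMap.smul_apply]
  ring

lemma hasFDerivAt_inv_sqrt_s (x : Fin 4 → ℝ) (hs : 0 < (x 3) ^ 2 - (x 2) ^ 2) :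
    HasFDerivAt (fun y : Fin 4 → ℝ => (Real.sqrt ((y 3) ^ 2 - (y 2) ^ 2))⁻¹)
      ((-(Real.sqrt ((x 3) ^ 2 - (x 2) ^ 2) ^ 2)⁻¹) •
        ((1 / (2 * Real.sqrt ((x 3) ^ 2 - (x 2) ^ 2))) •
          ((2 * x 3) • prj 3 - (2 * x 2) • prj 2))) x := by
  have hr0 : 0 < Real.sqrt ((x 3) ^ 2 - (x 2) ^ 2) := Real.sqrt_pos.mpr hs
  have hsq : HasFDerivAt (fun y : Fin 4 → ℝ => Real.sqrt ((y 3) ^ 2 - (y 2) ^ 2))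
      ((1 / (2 * Real.sqrt ((x 3) ^ 2 - (x 2) ^ 2))) •
        ((2 * x 3) • prj 3 - (2 * x 2) • prj 2)) x :=
    (Real.hasDerivAt_sqrt hs.ne').comp_hasFDerivAt x (hasFDerivAt_s x)
  exact (hasDerivAt_inv hr0.ne').comp_hasFDerivAt x hsq

lemma pd_zero (x : Fin 4 → ℝ) (μ : Fin 4) : pd μ (fun _ : Fin 4 → ℝ => (0:ℝ)) x = 0 := by
  rw [pd, fderiv_fun_const]
  simp

lemma pd_U2 (x : Fin 4 → ℝ) (hs : 0 < (x 3) ^ 2 - (x 2) ^ 2) (μ : Fin 4) :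
    pd μ (fun y : Fin 4 → ℝ => y 2 / Real.sqrt ((y 3) ^ 2 - (y 2) ^ 2)) x =
      (if μ = 2 then (x 3) ^ 2 else if μ = 3 then -(x 2 * x 3) else 0) /
        (Real.sqrt ((x 3) ^ 2 - (x 2) ^ 2)) ^ 3 := by
  have hr0 : 0 < Real.sqrt ((x 3) ^ 2 - (x 2) ^ 2) := Real.sqrt_pos.mpr hs
  have hr2 : Real.sqrt ((x 3) ^ 2 - (x 2) ^ 2) ^ 2 = (x 3) ^ 2 - (x 2) ^ 2 :=
    Real.sq_sqrt hs.le
  have hfun : (fun y : Fin 4 → ℝ => y 2 / Real.sqrt ((y 3) ^ 2 - (y 2) ^ 2))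
      = fun y : Fin 4 → ℝ => y 2 * (Real.sqrt ((y 3) ^ 2 - (y 2) ^ 2))⁻¹ := by
    funext y; rw [div_eq_mul_inv]
  have hU : HasFDerivAt (fun y : Fin 4 → ℝ => y 2 * (Real.sqrt ((y 3) ^ 2 - (y 2) ^ 2))⁻¹)
      ((x 2) • ((-(Real.sqrt ((x 3) ^ 2 - (x 2) ^ 2) ^ 2)⁻¹) •
        ((1 / (2 * Real.sqrt ((x 3) ^ 2 - (x 2) ^ 2))) •
          ((2 * x 3) • prj 3 - (2 * x 2) • prj 2)))
        + (Real.sqrt ((x 3) ^ 2 - (x 2) ^ 2))⁻¹ • prj 2) x :=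
    (prj 2).hasFDerivAt.mul (hasFDerivAt_inv_sqrt_s x hs)
  rw [pd, hfun, hU.fderiv]
  fin_cases μ <;>
    simp (config := { decide := true }) [ContinuousLinearMap.smul_apply, Pi.single_apply]
  · field_simp
    linear_combination hr2
  · field_simp

lemma pd_U3 (x : Fin 4 → ℝ) (hs : 0 < (x 3) ^ 2 - (x 2) ^ 2) (μ : Fin 4) :
    pd μ (fun y : Fin 4 → ℝ => y 3 / Real.sqrt ((y 3) ^ 2 - (y 2) ^ 2)) x =
      (if μ = 2 then x 2 * x 3 else if μ = 3 then -(x 2) ^ 2 else 0) /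
        (Real.sqrt ((x 3) ^ 2 - (x 2) ^ 2)) ^ 3 := by
  have hr0 : 0 < Real.sqrt ((x 3) ^ 2 - (x 2) ^ 2) := Real.sqrt_pos.mpr hs
  have hr2 : Real.sqrt ((x 3) ^ 2 - (x 2) ^ 2) ^ 2 = (x 3) ^ 2 - (x 2) ^ 2 :=
    Real.sq_sqrt hs.le
  have hfun : (fun y : Fin 4 → ℝ => y 3 / Real.sqrt ((y 3) ^ 2 - (y 2) ^ 2))
      = fun y : Fin 4 → ℝ => y 3 * (Real.sqrt ((y 3) ^ 2 - (y 2) ^ 2))⁻¹ := by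
    funext y; rw [div_eq_mul_inv]
  have hU : HasFDerivAt (fun y : Fin 4 → ℝ => y 3 * (Real.sqrt ((y 3) ^ 2 - (y 2) ^ 2))⁻¹)
      ((x 3) • ((-(Real.sqrt ((x 3) ^ 2 - (x 2) ^ 2) ^ 2)⁻¹) •
        ((1 / (2 * Real.sqrt ((x 3) ^ 2 - (x 2) ^ 2))) •
          ((2 * x 3) • prj 3 - (2 * x 2) • prj 2)))
        + (Real.sqrt ((x 3) ^ 2 - (x 2) ^ 2))⁻¹ • prj 3) x :=
    (prj 3).hasFDerivAt.mul (hasFDerivAt_inv_sqrt_s x hs)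
  rw [pd, hfun, hU.fderiv]
  fin_cases μ <;>
    simp (config := { decide := true }) [ContinuousLinearMap.smul_apply, Pi.single_apply]
  · field_simp
  · field_simp
    linear_combination hr2

lemma pd_rho (x : Fin 4 → ℝ) (hs : 0 < (x 3) ^ 2 - (x 2) ^ 2) (k : ℝ) (μ : Fin 4) :
    pd μ (fun y => ((y 3) ^ 2 - (y 2) ^ 2) ^ (-k)) x =
      (if μ = 2 then 2 * k * x 2 else if μ = 3 then -(2 * k * x 3) else 0) *
        ((x 3) ^ 2 - (x 2) ^ 2) ^ (-k - 1) := by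
  have hU : HasFDerivAt (fun y : Fin 4 → ℝ => ((y 3) ^ 2 - (y 2) ^ 2) ^ (-k))
      ((-k * ((x 3) ^ 2 - (x 2) ^ 2) ^ (-k - 1)) •
        ((2 * x 3) • prj 3 - (2 * x 2) • prj 2)) x :=
    by have := (Real.hasDerivAt_rpow_const (p := -k) (Or.inl hs.ne')).comp_hasFDerivAt x (hasFDerivAt_s x); exact this
  rw [pd, hU.fderiv]
  fin_cases μ <;>
    simp (config := { decide := true }) [ContinuousLinearMap.smul_apply, Pi.single_apply] <;>
    ring

lemma pd_p (x : Fin 4 → ℝ) (hs : 0 < (x 3) ^ 2 - (x 2) ^ 2) (k c : ℝ) (μ : Fin 4) :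
    pd μ (fun y => c * ((y 3) ^ 2 - (y 2) ^ 2) ^ (-k)) x =
      c * ((if μ = 2 then 2 * k * x 2 else if μ = 3 then -(2 * k * x 3) else 0) *
        ((x 3) ^ 2 - (x 2) ^ 2) ^ (-k - 1)) := by
  have hU : HasFDerivAt (fun y : Fin 4 → ℝ => ((y 3) ^ 2 - (y 2) ^ 2) ^ (-k))
      ((-k * ((x 3) ^ 2 - (x 2) ^ 2) ^ (-k - 1)) •
        ((2 * x 3) • prj 3 - (2 * x 2) • prj 2)) x :=
    by have := (Real.hasDerivAt_rpow_const (p := -k) (Or.inl hs.ne')).comp_hasFDerivAt x (hasFDerivAt_s x); exact this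
  rw [pd, (hU.const_mul c).fderiv]
  fin_cases μ <;>
    simp (config := { decide := true }) [ContinuousLinearMap.smul_apply, Pi.single_apply] <;>
    exact Or.inl (by ring)

/-- the generalized Hwa–Bjorken flow with
`ρ = (x₄² − x₃²)^{−k}`, `p = (2k−1)ρ` solves the relativistic Euler equations
and the energy conservation equation on the wedge `x₄ > |x₃|`. -/
theorem statement12 :
    (∀ x ∈ wedge, eta (Uwedge x) (Uwedge x) = -1) ∧
    ∀ k : ℝ, 0 < k →
      EulerEqs wedge Uwedge (fun x => ((x 3) ^ 2 - (x 2) ^ 2) ^ (-k))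
        (fun x => (2 * k - 1) * ((x 3) ^ 2 - (x 2) ^ 2) ^ (-k)) ∧
      EnergyCons wedge Uwedge (fun x => ((x 3) ^ 2 - (x 2) ^ 2) ^ (-k))
        (fun x => (2 * k - 1) * ((x 3) ^ 2 - (x 2) ^ 2) ^ (-k)) := by
  have hwedge : ∀ x ∈ wedge, (0:ℝ) < (x 3) ^ 2 - (x 2) ^ 2 := by
    intro x hx
    have hb : |x 2| < x 3 := hx
    have h := abs_lt.mp hb
    nlinarith [h.1, h.2]
  constructor
  · intro x hx
    have hs := hwedge x hx
    have hr0 : 0 < Real.sqrt ((x 3) ^ 2 - (x 2) ^ 2) := Real.sqrt_pos.mpr hs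
    have hr2 : Real.sqrt ((x 3) ^ 2 - (x 2) ^ 2) ^ 2 = (x 3) ^ 2 - (x 2) ^ 2 :=
      Real.sq_sqrt hs.le
    simp (config := { decide := true }) [eta, etaCoef, Uwedge, Fin.sum_univ_four]
    field_simp
    linear_combination hr2
  · intro k hk
    constructor
    · intro x hx ν
      have hs := hwedge x hx
      have hr0 : 0 < Real.sqrt ((x 3) ^ 2 - (x 2) ^ 2) := Real.sqrt_pos.mpr hs
      have hr2 : Real.sqrt ((x 3) ^ 2 - (x 2) ^ 2) ^ 2 = (x 3) ^ 2 - (x 2) ^ 2 :=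
        Real.sq_sqrt hs.le
      have hE : ((x 3) ^ 2 - (x 2) ^ 2) ^ (-k)
          = ((x 3) ^ 2 - (x 2) ^ 2) * ((x 3) ^ 2 - (x 2) ^ 2) ^ (-k - 1) := by
        have h := Real.rpow_add hs 1 (-k - 1)
        rw [Real.rpow_one] at h
        calc ((x 3) ^ 2 - (x 2) ^ 2) ^ (-k)
            = ((x 3) ^ 2 - (x 2) ^ 2) ^ ((1:ℝ) + (-k - 1)) := by
              rw [show (1:ℝ) + (-k - 1) = -k by ring]
          _ = ((x 3) ^ 2 - (x 2) ^ 2) * ((x 3) ^ 2 - (x 2) ^ 2) ^ (-k - 1) := h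
      fin_cases ν <;>
        simp (config := { decide := true }) [mgrad, eta, Fin.sum_univ_four, Uwedge,
          etaCoef, pd_zero x, pd_U2 x hs, pd_U3 x hs, pd_rho x hs, pd_p x hs, hE] <;>
        field_simp
      · linear_combination (x 2 * ((x 3) ^ 2 - (x 2) ^ 2) ^ (-k - 1) * (k * 2) * (k * 2 - 1) *
          Real.sqrt ((x 3) ^ 2 - (x 2) ^ 2) ^ 2) * hr2
      · linear_combination (x 3 * ((x 3) ^ 2 - (x 2) ^ 2) ^ (-k - 1) * (k * 2) * (k * 2 - 1) *
          Real.sqrt ((x 3) ^ 2 - (x 2) ^ 2) ^ 2) * hr2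
    · intro x hx
      have hs := hwedge x hx
      have hr0 : 0 < Real.sqrt ((x 3) ^ 2 - (x 2) ^ 2) := Real.sqrt_pos.mpr hs
      have hr2 : Real.sqrt ((x 3) ^ 2 - (x 2) ^ 2) ^ 2 = (x 3) ^ 2 - (x 2) ^ 2 :=
        Real.sq_sqrt hs.le
      have hE : ((x 3) ^ 2 - (x 2) ^ 2) ^ (-k)
          = ((x 3) ^ 2 - (x 2) ^ 2) * ((x 3) ^ 2 - (x 2) ^ 2) ^ (-k - 1) := by
        have h := Real.rpow_add hs 1 (-k - 1)
        rw [Real.rpow_one] at h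
        calc ((x 3) ^ 2 - (x 2) ^ 2) ^ (-k)
            = ((x 3) ^ 2 - (x 2) ^ 2) ^ ((1:ℝ) + (-k - 1)) := by
              rw [show (1:ℝ) + (-k - 1) = -k by ring]
          _ = ((x 3) ^ 2 - (x 2) ^ 2) * ((x 3) ^ 2 - (x 2) ^ 2) ^ (-k - 1) := h
      simp (config := { decide := true }) [EnergyCons, Fin.sum_univ_four, Uwedge,
        etaCoef, pd_zero x, pd_U2 x hs, pd_U3 x hs, pd_rho x hs, hE]
      field_simp
      linear_combination (2 * k * ((x 3) ^ 2 - (x 2) ^ 2) ^ (-k - 1) *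
        ((x 2) ^ 2 - (x 3) ^ 2)) * hr2
end
end
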